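/- Let G' = (V', E') be a graph with independence number α(G'). Form G = (V,E) by adding n'' = |V'| − ⌈|V'|^{1−β}⌉ new vertices each adjacent to all other vertices of G (for some β with |V'|^{1−β} ≤ |V'|). If α(G') ≥ |V'|^{1−β}, then eds(G) ≤ |V'| − ⌈|V'|^{1−β}⌉. -/

import Mathlib

/-- Adding `n'' = |V'| − ⌈|V'|^{1−β}⌉` universal vertices to `G'`: if `G'` has an
independent set of size at least `|V'|^{1−β}`, then the resulting graph `G` has
an edge dominating set of size at most `|V'| − ⌈|V'|^{1−β}⌉`. -/
theorem stmt8 {V' : Type*} [Fintype V'] [DecidableEq V'] (G' : SimpleGraph V')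
    (β : ℝ)
    (hβ : ((Fintype.card V' : ℝ)) ^ ((1 : ℝ) - β) ≤ (Fintype.card V' : ℝ))
    (n'' : ℕ)
    (hn'' : n'' = Fintype.card V' - ⌈((Fintype.card V' : ℝ)) ^ ((1 : ℝ) - β)⌉₊)
    (G : SimpleGraph (V' ⊕ Fin n'')) [DecidableRel G.Adj]
    (hG1 : ∀ a b : V', G.Adj (Sum.inl a) (Sum.inl b) ↔ G'.Adj a b)
    (hG2 : ∀ x y : V' ⊕ Fin n'', x ≠ y → (x.isRight ∨ y.isRight) → G.Adj x y)
    (hα : ∃ S : Finset V', (∀ a ∈ S, ∀ b ∈ S, ¬ G'.Adj a b) ∧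
      ((Fintype.card V' : ℝ)) ^ ((1 : ℝ) - β) ≤ (S.card : ℝ)) :
    ∃ D : Finset (Sym2 (V' ⊕ Fin n'')),
      (D ⊆ G.edgeFinset ∧ ∀ e ∈ G.edgeFinset, ∃ f ∈ D, ∃ v, v ∈ e ∧ v ∈ f) ∧
      D.card ≤ Fintype.card V' - ⌈((Fintype.card V' : ℝ)) ^ ((1 : ℝ) - β)⌉₊ := by
  obtain ⟨S, hSind, hScard⟩ := hα
  set k : ℕ := ⌈((Fintype.card V' : ℝ)) ^ ((1 : ℝ) - β)⌉₊ with hk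
  have hkS : k ≤ S.card := Nat.ceil_le.2 (by exact_mod_cast hScard)
  obtain ⟨S', hS'sub, hS'card⟩ := Finset.exists_subset_card_eq hkS
  have hcompl : (S'ᶜ : Finset V').card = n'' := by
    rw [Finset.card_compl, hS'card, hn'']
  have hcard : Fintype.card (↥(S'ᶜ : Finset V')) = n'' := by
    rw [Fintype.card_coe, hcompl]
  let eqv : ↥(S'ᶜ : Finset V') ≃ Fin n'' := Fintype.equivFinOfCardEq hcard
  refine ⟨(S'ᶜ : Finset V').attach.image
    (fun v => s(Sum.inl v.1, Sum.inr (eqv v))), ⟨?_, ?_⟩, ?_⟩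
  · intro e he
    simp only [Finset.mem_image, Finset.mem_attach, true_and] at he
    obtain ⟨v, rfl⟩ := he
    rw [SimpleGraph.mem_edgeFinset, SimpleGraph.mem_edgeSet]
    exact hG2 _ _ (by simp) (Or.inr rfl)
  · intro e he
    rw [SimpleGraph.mem_edgeFinset] at he
    induction e using Sym2.ind with
    | _ x y =>
      rw [SimpleGraph.mem_edgeSet] at he
      have key : ∀ z : V' ⊕ Fin n'',
          (∃ a, z = Sum.inl a ∧ a ∉ S') ∨ (∃ j, z = Sum.inr j) →
          ∃ f ∈ (S'ᶜ : Finset V').attach.image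
            (fun v => s(Sum.inl v.1, Sum.inr (eqv v))), z ∈ f := by
        rintro z (⟨a, rfl, ha⟩ | ⟨j, rfl⟩)
        · refine ⟨s(Sum.inl a, Sum.inr (eqv ⟨a, Finset.mem_compl.2 ha⟩)), ?_, ?_⟩
          · exact Finset.mem_image.2 ⟨⟨a, Finset.mem_compl.2 ha⟩,
              Finset.mem_attach _ _, rfl⟩
          · simp
        · obtain ⟨v, hv⟩ := eqv.surjective j
          refine ⟨s(Sum.inl v.1, Sum.inr j), ?_, ?_⟩
          · exact Finset.mem_image.2 ⟨v, Finset.mem_attach _ _, by rw [hv]⟩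
          · simp
      match x, y with
      | Sum.inl a, Sum.inl b =>
        have hab : G'.Adj a b := (hG1 a b).1 he
        by_cases ha : a ∈ S'
        · by_cases hb : b ∈ S'
          · exact absurd hab (hSind a (hS'sub ha) b (hS'sub hb))
          · obtain ⟨f, hf, hzf⟩ := key (Sum.inl b) (Or.inl ⟨b, rfl, hb⟩)
            exact ⟨f, hf, Sum.inl b, by simp, hzf⟩
        · obtain ⟨f, hf, hzf⟩ := key (Sum.inl a) (Or.inl ⟨a, rfl, ha⟩)
          exact ⟨f, hf, Sum.inl a, by simp, hzf⟩
      | Sum.inl a, Sum.inr j =>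
        obtain ⟨f, hf, hzf⟩ := key (Sum.inr j) (Or.inr ⟨j, rfl⟩)
        exact ⟨f, hf, Sum.inr j, by simp, hzf⟩
      | Sum.inr j, y =>
        obtain ⟨f, hf, hzf⟩ := key (Sum.inr j) (Or.inr ⟨j, rfl⟩)
        exact ⟨f, hf, Sum.inr j, by simp, hzf⟩
  · calc _ ≤ (S'ᶜ : Finset V').attach.card := Finset.card_image_le
      _ = n'' := by rw [Finset.card_attach, hcompl]
      _ ≤ _ := hn''.le
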